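/- Let k ≥ 3 be odd with ℓ = (k-1)/2 odd, and let Γ be a perfect matching (1-factor) of K_{2k}. Then the graph Γ + ℓ (obtained by adding ℓ new vertices adjacent to all 2k vertices of Γ) decomposes into k cycles of length k, each containing exactly one edge of Γ. -/

import Mathlib

open SimpleGraph

/-- The graph `H + W`: `H` together with the new vertices of `W`, each adjacent to
every vertex of `H`'s (whole) vertex type. -/
def plusW {V : Type*} (H : SimpleGraph V) (W : Type*) : SimpleGraph (V ⊕ W) :=
  SimpleGraph.fromRel (fun x y =>
    (∃ u v, x = Sum.inl u ∧ y = Sum.inl v ∧ H.Adj u v) ∨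
    (∃ u j, x = Sum.inl u ∧ y = Sum.inr j))

/-- A graph `H` is a cycle of length `k`. -/
def IsCycleGraphOn {V : Type*} (k : ℕ) (H : SimpleGraph V) : Prop :=
  ∃ c : ZMod k → V, Function.Injective c ∧
    H.edgeSet = {e | ∃ i : ZMod k, e = s(c i, c (i + 1))}

section Main

variable {k ℓ : ℕ} {V : Type*} (A B : ZMod k → V)

def pv (i : ZMod k) (t : ℕ) : V :=
  if t % 2 = 0 then A (i + ((t/2 : ℕ) : ZMod k)) else B (i + ((t/2 : ℕ) : ZMod k))

def slot2 (ℓ j : ℕ) : ℕ := (j + 2) % (ℓ + 1)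

def cyc (hk : k = 2*ℓ+1) (i x : ZMod k) : V ⊕ Fin ℓ :=
  if h : x.val % 2 = 0 ∧ x.val ≠ 0 then
    Sum.inr ⟨x.val / 2 - 1, by
      haveI : NeZero k := ⟨by omega⟩
      have := ZMod.val_lt x
      omega⟩
  else Sum.inl (pv A B i ((x.val + 1) / 2))

def Ed (i : ZMod k) : Set (Sym2 (V ⊕ Fin ℓ)) :=
  {s(Sum.inl (A i), Sum.inl (B i))} ∪
  (⋃ j : Fin ℓ, {s(Sum.inl (pv A B i (j+1)), Sum.inr j),
                 s(Sum.inl (pv A B i (slot2 ℓ j)), Sum.inr j)})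

lemma mem_Ed {i : ZMod k} {e : Sym2 (V ⊕ Fin ℓ)} :
    e ∈ Ed A B i ↔ e = s(Sum.inl (A i), Sum.inl (B i)) ∨
      ∃ j : Fin ℓ, e = s(Sum.inl (pv A B i (j+1)), Sum.inr j) ∨
                   e = s(Sum.inl (pv A B i (slot2 ℓ j)), Sum.inr j) := by
  simp [Ed]

variable {A B} (hk : k = 2*ℓ+1)

lemma cyc_cast (i : ZMod k) (r : ℕ) (hr : r < k) :
    cyc (A := A) (B := B) hk i (r : ZMod k) =
      if h : r % 2 = 0 ∧ r ≠ 0 then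
        Sum.inr ⟨r / 2 - 1, by omega⟩
      else Sum.inl (pv A B i ((r + 1) / 2)) := by
  rw [cyc]
  by_cases h : r % 2 = 0 ∧ r ≠ 0
  · rw [dif_pos (by rwa [ZMod.val_natCast_of_lt hr]), dif_pos h]
    simp [ZMod.val_natCast_of_lt hr]
  · rw [dif_neg (by rwa [ZMod.val_natCast_of_lt hr]), dif_neg h,
      ZMod.val_natCast_of_lt hr]

lemma cyc_zero (i : ZMod k) : cyc (A := A) (B := B) hk i 0 = Sum.inl (A i) := by
  have h0 : ((0 : ℕ) : ZMod k) = 0 := Nat.cast_zero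
  rw [← h0, cyc_cast hk i 0 (by omega), dif_neg (by omega)]
  simp [pv]

lemma cyc_one (hℓpos : 0 < ℓ) (i : ZMod k) : cyc (A := A) (B := B) hk i 1 = Sum.inl (B i) := by
  have h0 : ((1 : ℕ) : ZMod k) = 1 := Nat.cast_one
  rw [← h0, cyc_cast hk i 1 (by omega), dif_neg (by omega)]
  simp [pv]

lemma cyc_spec_odd (i x : ZMod k) (h : ¬(x.val % 2 = 0 ∧ x.val ≠ 0)) :
    cyc (A := A) (B := B) hk i x = Sum.inl (pv A B i ((x.val + 1) / 2)) := by
  rw [cyc, dif_neg h]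

lemma cyc_spec_even (i x : ZMod k) (h : x.val % 2 = 0 ∧ x.val ≠ 0)
    (hb : x.val / 2 - 1 < ℓ) :
    cyc (A := A) (B := B) hk i x = Sum.inr ⟨x.val / 2 - 1, hb⟩ := by
  rw [cyc, dif_pos h]

section EdCyc

variable (hℓ : Odd ℓ)

lemma cast_succ_zmod (r : ℕ) : ((r : ZMod k) + 1) = ((r + 1 : ℕ) : ZMod k) := by
  push_cast; ring

lemma cast_k_zero : ((k : ℕ) : ZMod k) = 0 := ZMod.natCast_self k

lemma edge_congr {α : Type*} {a b c d : α} (h1 : a = c) (h2 : b = d) :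
    s(a, b) = s(c, d) := by rw [h1, h2]

include hk hℓ in
lemma Ed_eq_cyc (i : ZMod k) :
    Ed A B i = {e | ∃ x : ZMod k, e = s(cyc (A := A) (B := B) hk i x, cyc (A := A) (B := B) hk i (x+1))} := by
  haveI : NeZero k := ⟨by omega⟩
  have hℓpos : 0 < ℓ := hℓ.pos
  ext e
  rw [mem_Ed, Set.mem_setOf_eq]
  constructor
  · rintro (rfl | ⟨j, rfl | rfl⟩)
    · exact ⟨0, by rw [zero_add, cyc_zero hk, cyc_one hk hℓpos]⟩
    · refine ⟨((2 * j.val + 1 : ℕ) : ZMod k), ?_⟩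
      rw [cast_succ_zmod, cyc_cast hk i _ (by omega), cyc_cast hk i _ (by omega),
        dif_neg (by omega), dif_pos ⟨by omega, by omega⟩]
      refine edge_congr (congrArg (fun t => Sum.inl (pv A B i t)) (by omega))
        (congrArg Sum.inr (Fin.ext ?_))
      simp only [Fin.val_mk]
      omega
    · by_cases hj : j.val + 1 < ℓ
      · refine ⟨((2 * j.val + 2 : ℕ) : ZMod k), ?_⟩
        rw [cast_succ_zmod, cyc_cast hk i _ (by omega), cyc_cast hk i _ (by omega),
          dif_pos ⟨by omega, by omega⟩, dif_neg (by omega), Sym2.eq_swap]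
        refine edge_congr (congrArg Sum.inr (Fin.ext ?_))
          (congrArg (fun t => Sum.inl (pv A B i t)) ?_)
        · simp only [Fin.val_mk]; omega
        · rw [slot2, Nat.mod_eq_of_lt (by omega)]; omega
      · have hjv : j.val = ℓ - 1 := by omega
        refine ⟨((2 * ℓ : ℕ) : ZMod k), ?_⟩
        have h1 : ((2*ℓ : ℕ) : ZMod k) + 1 = 0 := by
          rw [cast_succ_zmod]
          have h2 : 2*ℓ+1 = k := by omega
          rw [h2, cast_k_zero]
        rw [h1, cyc_zero hk, cyc_cast hk i _ (by omega),
          dif_pos ⟨by omega, by omega⟩, Sym2.eq_swap]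
        refine edge_congr (congrArg Sum.inr (Fin.ext ?_)) ?_
        · simp only [Fin.val_mk]; omega
        · have hs : slot2 ℓ j.val = 0 := by
            rw [slot2]
            have h3 : j.val + 2 = ℓ + 1 := by omega
            rw [h3, Nat.mod_self]
          rw [hs]
          simp [pv]
  · rintro ⟨x, rfl⟩
    have hr : x.val < k := ZMod.val_lt x
    have hx : ((x.val : ℕ) : ZMod k) = x := ZMod.natCast_rightInverse x
    by_cases hlast : x.val = 2*ℓ
    · have h1 : x + 1 = 0 := by
        rw [← hx, hlast, cast_succ_zmod]
        have h2 : 2*ℓ+1 = k := by omega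
        rw [h2, cast_k_zero]
      rw [h1, cyc_zero hk, cyc_spec_even hk i x ⟨by omega, by omega⟩ (by omega),
        Sym2.eq_swap]
      right
      refine ⟨⟨ℓ - 1, by omega⟩, Or.inr ?_⟩
      have hs : slot2 ℓ ((⟨ℓ - 1, by omega⟩ : Fin ℓ) : ℕ) = 0 := by
        simp only [Fin.val_mk, slot2]
        have h3 : ℓ - 1 + 2 = ℓ + 1 := by omega
        rw [h3, Nat.mod_self]
      rw [hs]
      refine edge_congr ?_ (congrArg Sum.inr (Fin.ext ?_))
      · simp [pv]
      · simp only [Fin.val_mk]; omega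
    · have h1 : x + 1 = ((x.val + 1 : ℕ) : ZMod k) := by rw [← hx, cast_succ_zmod, hx]
      rcases Nat.eq_zero_or_pos x.val with h0 | h0
      · left
        have h2 : x = 0 := by rw [← hx, h0, Nat.cast_zero]
        rw [h2, zero_add, cyc_zero hk, cyc_one hk hℓpos]
      · rcases Nat.even_or_odd x.val with he | ho
        · have he2 := Nat.even_iff.mp he
          right
          refine ⟨⟨x.val/2 - 1, by omega⟩, Or.inr ?_⟩
          rw [h1, cyc_spec_even hk i x ⟨by omega, by omega⟩ (by omega),
            cyc_cast hk i _ (by omega), dif_neg (by omega), Sym2.eq_swap]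
          have hs : slot2 ℓ ((⟨x.val/2 - 1, by omega⟩ : Fin ℓ) : ℕ) = x.val/2 + 1 := by
            simp only [Fin.val_mk, slot2]
            rw [Nat.mod_eq_of_lt (by omega)]
            omega
          rw [hs]
          refine edge_congr (congrArg (fun t => Sum.inl (pv A B i t)) (by omega))
            (congrArg Sum.inr (Fin.ext ?_))
          simp only [Fin.val_mk]
        · have ho2 := Nat.odd_iff.mp ho
          right
          refine ⟨⟨x.val/2, by omega⟩, Or.inl ?_⟩
          rw [h1, cyc_spec_odd hk i x (by omega),
            cyc_cast hk i _ (by omega), dif_pos ⟨by omega, by omega⟩]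
          refine edge_congr (congrArg (fun t => Sum.inl (pv A B i t)) ?_)
            (congrArg Sum.inr (Fin.ext ?_)) <;> simp only [Fin.val_mk] <;> omega

end EdCyc

section Inj

variable (hA : Function.Injective A) (hB : Function.Injective B)
  (hABne : ∀ i j, A i ≠ B j) (hℓ : Odd ℓ)

lemma natCast_zmod_inj {a b : ℕ} (ha : a < k) (hb : b < k)
    (h : (a : ZMod k) = b) : a = b := by
  have h2 := congrArg ZMod.val h
  rwa [ZMod.val_natCast_of_lt ha, ZMod.val_natCast_of_lt hb] at h2

include hABne in
lemma pv_ne_parity {i i' : ZMod k} {s s' : ℕ} (h : s % 2 ≠ s' % 2) :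
    pv A B i s ≠ pv A B i' s' := by
  unfold pv
  rcases Nat.even_or_odd s with hs | hs
  · have h1 : s % 2 = 0 := Nat.even_iff.mp hs
    have h2 : ¬ (s' % 2 = 0) := by omega
    rw [if_pos h1, if_neg h2]
    exact hABne _ _
  · have h0 := Nat.odd_iff.mp hs
    have h1 : ¬ (s % 2 = 0) := by omega
    have h2 : s' % 2 = 0 := by omega
    rw [if_neg h1, if_pos h2]
    exact fun he => hABne _ _ he.symm

include hA hB in
lemma pv_inj_slot {i i' : ZMod k} {s : ℕ} (h : pv A B i s = pv A B i' s) : i = i' := by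
  unfold pv at h
  by_cases hs : s % 2 = 0
  · rw [if_pos hs, if_pos hs] at h
    exact add_right_cancel (hA h)
  · rw [if_neg hs, if_neg hs] at h
    exact add_right_cancel (hB h)

include hk hA hB hABne in
lemma pv_inj_i {i : ZMod k} {t t' : ℕ} (ht : t ≤ ℓ) (ht' : t' ≤ ℓ)
    (h : pv A B i t = pv A B i t') : t = t' := by
  have hpar : t % 2 = t' % 2 := by
    by_contra hc
    exact pv_ne_parity hABne hc h
  unfold pv at h
  have hhalf : t / 2 = t' / 2 := by
    by_cases hs : t % 2 = 0
    · rw [if_pos hs, if_pos (hpar ▸ hs)] at h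
      exact natCast_zmod_inj (by omega) (by omega) (add_left_cancel (hA h))
    · rw [if_neg hs, if_neg (fun hc => hs (hpar ▸ hc))] at h
      exact natCast_zmod_inj (by omega) (by omega) (add_left_cancel (hB h))
  omega

include hk hA hB hABne in
lemma cyc_inj (i : ZMod k) : Function.Injective (cyc (A := A) (B := B) hk i) := by
  haveI : NeZero k := ⟨by omega⟩
  intro x y h
  have hrx : x.val < k := ZMod.val_lt x
  have hry : y.val < k := ZMod.val_lt y
  have hval : x.val = y.val := by
    by_cases hx1 : x.val % 2 = 0 ∧ x.val ≠ 0 <;>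
      by_cases hy1 : y.val % 2 = 0 ∧ y.val ≠ 0
    · rw [cyc, dif_pos hx1, cyc, dif_pos hy1] at h
      have h2 : x.val / 2 - 1 = y.val / 2 - 1 := by
        have := Sum.inr.inj h
        exact Fin.mk.inj_iff.mp this
      omega
    · rw [cyc, dif_pos hx1, cyc, dif_neg hy1] at h
      exact absurd h (by simp)
    · rw [cyc, dif_neg hx1, cyc, dif_pos hy1] at h
      exact absurd h (by simp)
    · rw [cyc, dif_neg hx1, cyc, dif_neg hy1] at h
      have h2 := Sum.inl.inj h
      have h3 : (x.val + 1) / 2 = (y.val + 1) / 2 :=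
        pv_inj_i hk hA hB hABne (by omega) (by omega) h2
      omega
  exact ZMod.val_injective k hval

end Inj

section Disj

variable (hA : Function.Injective A) (hB : Function.Injective B)
  (hABne : ∀ i j, A i ≠ B j) (hℓ : Odd ℓ)

lemma slot2_le (j : ℕ) : slot2 ℓ j ≤ ℓ :=
  Nat.lt_succ_iff.mp (Nat.mod_lt _ (Nat.succ_pos ℓ))

include hℓ in
lemma slot2_mod2 {j : ℕ} (hj : j < ℓ) : slot2 ℓ j % 2 = j % 2 := by
  rcases lt_or_eq_of_le (Nat.succ_le_of_lt hj) with h | h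
  · have h2 : j + 2 < ℓ + 1 := by omega
    rw [slot2, Nat.mod_eq_of_lt h2]
    omega
  · have h2 : slot2 ℓ j = 0 := by
      rw [slot2]; have h3 : j + 2 = ℓ + 1 := by omega
      rw [h3, Nat.mod_self]
    rw [h2]
    rcases hℓ with ⟨m, hm⟩
    omega

include hk hA hB hABne hℓ in
lemma Ed_disjoint {i i' : ZMod k} (hii : i ≠ i') :
    Disjoint (Ed A B i : Set (Sym2 (V ⊕ Fin ℓ))) (Ed A B i') := by
  rw [Set.disjoint_left]
  intro e he he'
  rw [mem_Ed] at he he'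
  rcases he with rfl | ⟨j, hj⟩
  · rcases he' with he' | ⟨j', hj'⟩
    · rw [Sym2.eq_iff] at he'
      rcases he' with ⟨h1, _⟩ | ⟨h1, _⟩
      · exact hii (hA (Sum.inl.inj h1))
      · exact hABne _ _ (Sum.inl.inj h1)
    · rcases hj' with hj' | hj' <;>
      · rw [Sym2.eq_iff] at hj'
        rcases hj' with ⟨_, h2⟩ | ⟨h1, _⟩ <;> simp_all
  · have hjl := j.isLt
    have hpar : ∀ (s s' : ℕ), s = j.val + 1 ∨ s = slot2 ℓ j.val →
        s' = j.val + 1 ∨ s' = slot2 ℓ j.val → s % 2 = s' % 2 → s = s' := by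
      intro s s' hs hs' hp
      have hmod := slot2_mod2 hℓ (j := j.val) hjl
      rcases hs with rfl | rfl <;> rcases hs' with rfl | rfl <;> omega
    -- e is a star edge at j for cycle i
    have hstar : ∃ s, (s = j.val + 1 ∨ s = slot2 ℓ j.val) ∧
        e = s(Sum.inl (pv A B i s), Sum.inr j) := by
      rcases hj with rfl | rfl
      exacts [⟨j.val + 1, Or.inl rfl, rfl⟩, ⟨slot2 ℓ j.val, Or.inr rfl, rfl⟩]
    rcases hstar with ⟨s, hs, rfl⟩
    rcases he' with he' | ⟨j', hj'⟩
    · rw [Sym2.eq_iff] at he'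
      rcases he' with ⟨_, h2⟩ | ⟨h1, _⟩ <;> simp_all
    · have hstar' : ∃ s', (s' = j'.val + 1 ∨ s' = slot2 ℓ j'.val) ∧
          s(Sum.inl (pv A B i s), Sum.inr j) = s(Sum.inl (pv A B i' s'), Sum.inr j') := by
        rcases hj' with h | h
        exacts [⟨j'.val + 1, Or.inl rfl, h⟩, ⟨slot2 ℓ j'.val, Or.inr rfl, h⟩]
      rcases hstar' with ⟨s', hs', heq⟩
      rw [Sym2.eq_iff] at heq
      rcases heq with ⟨h1, h2⟩ | ⟨h1, _⟩
      · have hjj : j = j' := Sum.inr.inj h2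
        subst hjj
        have hpv := Sum.inl.inj h1
        by_cases hp : s % 2 = s' % 2
        · have : s = s' := hpar s s' hs hs' hp
          subst this
          exact hii (pv_inj_slot hA hB hpv)
        · exact pv_ne_parity hABne hp hpv
      · simp_all

end Disj

section Union

variable (Γ : SimpleGraph V)
  (hAB : ∀ i, Γ.Adj (A i) (B i))
  (hsurj : ∀ v, (∃ i, v = A i) ∨ (∃ i, v = B i))
  (hΓe : ∀ u v, Γ.Adj u v → ∃ i, s(u, v) = s(A i, B i))
  (hℓ : Odd ℓ)

include hsurj hℓ in
/-- every star edge is covered by some cycle. -/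
lemma star_cover (v : V) (j : Fin ℓ) :
    ∃ i, s(Sum.inl v, Sum.inr j) ∈ Ed A B i := by
  have hjl := j.isLt
  have hmod := slot2_mod2 hℓ (j := j.val) hjl
  rcases hsurj v with ⟨m, rfl⟩ | ⟨m, rfl⟩
  · -- need a slot with even parity
    by_cases hj2 : j.val % 2 = 0
    · refine ⟨m - ((slot2 ℓ j.val / 2 : ℕ) : ZMod k), ?_⟩
      rw [mem_Ed]
      refine Or.inr ⟨j, Or.inr ?_⟩
      have hpv : pv A B (m - ((slot2 ℓ j.val / 2 : ℕ) : ZMod k)) (slot2 ℓ j.val) = A m := by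
        rw [pv, if_pos (by omega)]
        rw [sub_add_cancel]
      rw [hpv]
    · refine ⟨m - (((j.val + 1) / 2 : ℕ) : ZMod k), ?_⟩
      rw [mem_Ed]
      refine Or.inr ⟨j, Or.inl ?_⟩
      have hpv : pv A B (m - (((j.val + 1) / 2 : ℕ) : ZMod k)) (j.val + 1) = A m := by
        rw [pv, if_pos (by omega)]
        rw [sub_add_cancel]
      rw [hpv]
  · by_cases hj2 : j.val % 2 = 0
    · refine ⟨m - (((j.val + 1) / 2 : ℕ) : ZMod k), ?_⟩
      rw [mem_Ed]
      refine Or.inr ⟨j, Or.inl ?_⟩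
      have hpv : pv A B (m - (((j.val + 1) / 2 : ℕ) : ZMod k)) (j.val + 1) = B m := by
        rw [pv, if_neg (by omega)]
        rw [sub_add_cancel]
      rw [hpv]
    · refine ⟨m - ((slot2 ℓ j.val / 2 : ℕ) : ZMod k), ?_⟩
      rw [mem_Ed]
      refine Or.inr ⟨j, Or.inr ?_⟩
      have hpv : pv A B (m - ((slot2 ℓ j.val / 2 : ℕ) : ZMod k)) (slot2 ℓ j.val) = B m := by
        rw [pv, if_neg (by omega)]
        rw [sub_add_cancel]
      rw [hpv]

include hAB hsurj hΓe hℓ in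
lemma Ed_union :
    (⋃ i : ZMod k, (Ed A B i : Set (Sym2 (V ⊕ Fin ℓ)))) = (plusW Γ (Fin ℓ)).edgeSet := by
  ext e
  simp only [Set.mem_iUnion]
  constructor
  · rintro ⟨i, he⟩
    rw [mem_Ed] at he
    rcases he with rfl | ⟨j, rfl | rfl⟩
    · rw [mem_edgeSet, plusW, fromRel_adj]
      exact ⟨fun hc => (hAB i).ne (Sum.inl.inj hc),
        Or.inl (Or.inl ⟨A i, B i, rfl, rfl, hAB i⟩)⟩
    · rw [mem_edgeSet, plusW, fromRel_adj]
      exact ⟨by simp, Or.inl (Or.inr ⟨_, j, rfl, rfl⟩)⟩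
    · rw [mem_edgeSet, plusW, fromRel_adj]
      exact ⟨by simp, Or.inl (Or.inr ⟨_, j, rfl, rfl⟩)⟩
  · induction e with
    | _ x y =>
      rw [mem_edgeSet, plusW, fromRel_adj]
      rintro ⟨hne, hrel | hrel⟩
      · rcases hrel with ⟨u, v, rfl, rfl, huv⟩ | ⟨u, j, rfl, rfl⟩
        · obtain ⟨i, hi⟩ := hΓe u v huv
          refine ⟨i, ?_⟩
          rw [mem_Ed]
          left
          rw [Sym2.eq_iff] at hi ⊢
          rcases hi with ⟨rfl, rfl⟩ | ⟨rfl, rfl⟩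
          · exact Or.inl ⟨rfl, rfl⟩
          · exact Or.inr ⟨rfl, rfl⟩
        · exact star_cover hsurj hℓ u j
      · rcases hrel with ⟨u, v, rfl, rfl, huv⟩ | ⟨u, j, rfl, rfl⟩
        · obtain ⟨i, hi⟩ := hΓe u v huv
          refine ⟨i, ?_⟩
          rw [mem_Ed]
          left
          rw [Sym2.eq_swap (a := Sum.inl v)]
          rw [Sym2.eq_iff] at hi ⊢
          rcases hi with ⟨rfl, rfl⟩ | ⟨rfl, rfl⟩
          · exact Or.inl ⟨rfl, rfl⟩
          · exact Or.inr ⟨rfl, rfl⟩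
        · obtain ⟨i, hi⟩ := star_cover (A := A) (B := B) hsurj hℓ u j
          exact ⟨i, by rwa [Sym2.eq_swap (a := Sum.inr j)] ⟩
      
end Union

section Uniq

variable (Γ : SimpleGraph V) (hAB : ∀ i, Γ.Adj (A i) (B i))
  (hABne : ∀ i j, A i ≠ B j)

include hAB in
lemma Ed_unique_matching (i : ZMod k) :
    ∃! e, e ∈ (Ed A B i : Set (Sym2 (V ⊕ Fin ℓ))) ∧
      e ∈ (Γ.map (⟨Sum.inl, Sum.inl_injective⟩ : V ↪ V ⊕ Fin ℓ) :
        SimpleGraph (V ⊕ Fin ℓ)).edgeSet := by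
  refine ⟨s(Sum.inl (A i), Sum.inl (B i)), ⟨?_, ?_⟩, ?_⟩
  · rw [mem_Ed]; exact Or.inl rfl
  · rw [mem_edgeSet]
    exact (map_adj _ _ _ _).mpr ⟨A i, B i, hAB i, rfl, rfl⟩
  · rintro e ⟨he, hm⟩
    rw [mem_Ed] at he
    rcases he with rfl | ⟨j, hj⟩
    · rfl
    · exfalso
      rcases hj with rfl | rfl <;>
      · rw [mem_edgeSet, map_adj] at hm
        obtain ⟨a, b, -, -, hb⟩ := hm
        simp at hb

end Uniq

section Pack

variable (hA : Function.Injective A) (hB : Function.Injective B)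
  (hABne : ∀ i j, A i ≠ B j)

include hABne in
lemma edgeSet_fromEdgeSet_Ed (i : ZMod k) :
    (fromEdgeSet (Ed A B i) : SimpleGraph (V ⊕ Fin ℓ)).edgeSet = Ed A B i := by
  rw [edgeSet_fromEdgeSet]
  rw [sdiff_eq_left, Set.disjoint_left]
  intro e he hd
  rw [mem_Ed] at he
  rcases he with rfl | ⟨j, rfl | rfl⟩ <;>
    rw [Sym2.mem_diagSet, Sym2.isDiag_iff_proj_eq] at hd
  · exact hABne i i (Sum.inl.inj hd)
  · simp at hd
  · simp at hd

end Pack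

section Final

variable (hℓ : Odd ℓ) (Γ : SimpleGraph V)
  (hA : Function.Injective A) (hB : Function.Injective B)
  (hABne : ∀ i j, A i ≠ B j)
  (hAB : ∀ i, Γ.Adj (A i) (B i))
  (hsurj : ∀ v, (∃ i, v = A i) ∨ (∃ i, v = B i))
  (hΓe : ∀ u v, Γ.Adj u v → ∃ i, s(u, v) = s(A i, B i))

include hk hℓ hA hB hABne hAB hsurj hΓe in
lemma decomposition :
    ∃ C : Fin k → SimpleGraph (V ⊕ Fin ℓ),
      (∀ i, IsCycleGraphOn k (C i)) ∧
      (Pairwise fun i j => Disjoint (C i).edgeSet (C j).edgeSet) ∧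
      (⋃ i, (C i).edgeSet) = (plusW Γ (Fin ℓ)).edgeSet ∧
      (∀ i, ∃! e, e ∈ (C i).edgeSet ∧
        e ∈ (Γ.map (⟨Sum.inl, Sum.inl_injective⟩ : V ↪ V ⊕ Fin ℓ)).edgeSet) := by
  haveI : NeZero k := ⟨by omega⟩
  refine ⟨fun m => fromEdgeSet (Ed A B ((m.val : ℕ) : ZMod k)), ?_, ?_, ?_, ?_⟩
  · intro m
    exact ⟨cyc (A := A) (B := B) hk _, cyc_inj hk hA hB hABne _,
      (edgeSet_fromEdgeSet_Ed hABne _).trans (Ed_eq_cyc hk hℓ _)⟩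
  · intro m m' hne
    rw [edgeSet_fromEdgeSet_Ed hABne, edgeSet_fromEdgeSet_Ed hABne]
    refine Ed_disjoint hk hA hB hABne hℓ ?_
    intro hc
    exact hne (Fin.ext (natCast_zmod_inj m.isLt m'.isLt hc))
  · have h1 : (⋃ m : Fin k, (fromEdgeSet (Ed A B ((m.val : ℕ) : ZMod k)) :
        SimpleGraph (V ⊕ Fin ℓ)).edgeSet) = ⋃ i : ZMod k, (Ed A B i : Set (Sym2 (V ⊕ Fin ℓ))) := by
      ext e
      simp only [Set.mem_iUnion, edgeSet_fromEdgeSet_Ed hABne]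
      constructor
      · rintro ⟨m, hm⟩; exact ⟨_, hm⟩
      · rintro ⟨i, hi⟩
        refine ⟨⟨i.val, ZMod.val_lt i⟩, ?_⟩
        rwa [ZMod.natCast_rightInverse i]
    rw [h1]
    exact Ed_union Γ hAB hsurj hΓe hℓ
  · intro m
    rw [edgeSet_fromEdgeSet_Ed hABne]
    exact Ed_unique_matching Γ hAB _

end Final

end Main


/-- Let `k ≥ 3` be odd with `ℓ = (k-1)/2` odd, and let `Γ` be a perfect matching of
`K_{2k}`. Then `Γ + ℓ` decomposes into `k` cycles of length `k`, each containing exactly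
one edge of `Γ`. -/
theorem stmt8 (k : ℕ) (hk3 : 3 ≤ k) (hk : Odd k) (hl : Odd ((k - 1) / 2))
    (Γ : SimpleGraph (Fin (2 * k))) (hΓ : ∀ v, ∃! u, Γ.Adj v u) :
    ∃ C : Fin k → SimpleGraph (Fin (2 * k) ⊕ Fin ((k - 1) / 2)),
      (∀ i, IsCycleGraphOn k (C i)) ∧
      (Pairwise fun i j => Disjoint (C i).edgeSet (C j).edgeSet) ∧
      (⋃ i, (C i).edgeSet) = (plusW Γ (Fin ((k - 1) / 2))).edgeSet ∧
      (∀ i, ∃! e, e ∈ (C i).edgeSet ∧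
        e ∈ (Γ.map (⟨Sum.inl, Sum.inl_injective⟩ : Fin (2 * k) ↪ Fin (2 * k) ⊕ Fin ((k - 1) / 2))).edgeSet) := by
  haveI : NeZero k := ⟨by omega⟩
  set ℓ := (k - 1) / 2 with hℓdef
  have hkodd := Nat.odd_iff.mp hk
  have hkℓ : k = 2 * ℓ + 1 := by omega
  -- the matching involution
  set f : Fin (2*k) → Fin (2*k) := fun v => (hΓ v).choose with hfdef
  have hf : ∀ v, Γ.Adj v (f v) := fun v => (hΓ v).choose_spec.1
  have hu : ∀ v u, Γ.Adj v u → u = f v := fun v u h => (hΓ v).choose_spec.2 u h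
  have hff : ∀ v, f (f v) = v := fun v => (hu (f v) v (hf v).symm).symm
  have hfne : ∀ v, f v ≠ v := fun v => (hf v).ne'
  have hfinj : Function.Injective f := by
    intro a b h
    rw [← hff a, h, hff]
  set S : Finset (Fin (2*k)) := Finset.univ.filter (fun v => v < f v) with hSdef
  set T : Finset (Fin (2*k)) := Finset.univ.filter (fun v => f v < v) with hTdef
  have hTS : T = S.image f := by
    ext v
    simp only [hSdef, hTdef, Finset.mem_filter, Finset.mem_univ, true_and,
      Finset.mem_image]
    constructor
    · intro h
      exact ⟨f v, by rw [hff]; exact h, hff v⟩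
    · rintro ⟨u, h1, rfl⟩
      rwa [hff]
  have hdisj : Disjoint S T := by
    rw [Finset.disjoint_left]
    intro v hvS hvT
    simp only [hSdef, hTdef, Finset.mem_filter] at hvS hvT
    exact absurd hvS.2 (not_lt_of_gt hvT.2)
  have huniv : S ∪ T = Finset.univ := by
    ext v
    simp only [Finset.mem_union, hSdef, hTdef, Finset.mem_filter, Finset.mem_univ,
      true_and, iff_true]
    rcases lt_or_gt_of_ne (hfne v) with h | h
    · exact Or.inr h
    · exact Or.inl h
  have hScard : S.card = k := by
    have h1 : S.card + T.card = 2 * k := by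
      rw [← Finset.card_union_of_disjoint hdisj, huniv, Finset.card_univ,
        Fintype.card_fin]
    have h2 : T.card = S.card := by
      rw [hTS, Finset.card_image_of_injective _ hfinj]
    omega
  set oi := S.orderIsoOfFin hScard with hoidef
  set A : ZMod k → Fin (2*k) := fun i => (oi ⟨i.val, ZMod.val_lt i⟩ : Fin (2*k)) with hAdef
  set B : ZMod k → Fin (2*k) := fun i => f (A i) with hBdef
  have hAmem : ∀ i, A i ∈ S := fun i => (oi ⟨i.val, ZMod.val_lt i⟩).2
  have hAlt : ∀ i, A i < f (A i) := by
    intro i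
    have := hAmem i
    rw [hSdef, Finset.mem_filter] at this
    exact this.2
  have hA : Function.Injective A := by
    intro a b h
    have h2 := Subtype.coe_injective h
    have h3 := oi.injective h2
    have h4 : a.val = b.val := Fin.mk.inj_iff.mp h3
    exact ZMod.val_injective k h4
  have hB : Function.Injective B := fun a b h => hA (hfinj h)
  have hABne : ∀ i j, A i ≠ B j := by
    intro i j h
    have h1 := hAlt i
    have h2 := hAlt j
    have h' : A i = f (A j) := h
    rw [← h'] at h2
    have h3 : f (A i) = A j := by
      conv_lhs => rw [h']
      rw [hff]
    rw [h3] at h1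
    exact absurd h1 (not_lt_of_gt h2)
  have hAB : ∀ i, Γ.Adj (A i) (B i) := fun i => hf (A i)
  have hfromS : ∀ v, v ∈ S → ∃ i, v = A i := by
    intro v hv
    obtain ⟨m, hm⟩ := oi.surjective ⟨v, hv⟩
    refine ⟨((m.val : ℕ) : ZMod k), ?_⟩
    have h5 : (⟨(((m.val : ℕ) : ZMod k)).val, ZMod.val_lt _⟩ : Fin k) = m :=
      Fin.ext (ZMod.val_natCast_of_lt m.isLt)
    have h6 : ((oi m : {x // x ∈ S}) : Fin (2*k)) = v := by rw [hm]
    calc v = ((oi m : {x // x ∈ S}) : Fin (2*k)) := h6.symm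
      _ = ((oi ⟨(((m.val : ℕ) : ZMod k)).val, ZMod.val_lt _⟩ : {x // x ∈ S}) : Fin (2*k)) :=
        congrArg (fun t : Fin k => ((oi t : {x // x ∈ S}) : Fin (2*k))) h5.symm
      _ = A ((m.val : ℕ) : ZMod k) := rfl
  have hsurj : ∀ v, (∃ i, v = A i) ∨ (∃ i, v = B i) := by
    intro v
    rcases lt_or_gt_of_ne (hfne v) with h | h
    · -- f v < v, so f v ∈ S
      right
      have hfv : f v ∈ S := by
        rw [hSdef, Finset.mem_filter]
        exact ⟨Finset.mem_univ _, by rwa [hff]⟩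
      obtain ⟨i, hi⟩ := hfromS (f v) hfv
      exact ⟨i, by show v = f (A i); rw [← hi, hff]⟩
    · left
      exact hfromS v (by rw [hSdef, Finset.mem_filter]; exact ⟨Finset.mem_univ _, h⟩)
  have hΓe : ∀ u v, Γ.Adj u v → ∃ i, s(u, v) = s(A i, B i) := by
    intro u v huv
    have hvfu : v = f u := hu u v huv
    rcases lt_or_gt_of_ne (hfne u) with h | h
    · -- f u < u : u = B i where f u = A i
      have hfu : f u ∈ S := by
        rw [hSdef, Finset.mem_filter]
        exact ⟨Finset.mem_univ _, by rwa [hff]⟩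
      obtain ⟨i, hi⟩ := hfromS (f u) hfu
      refine ⟨i, ?_⟩
      have h7 : u = B i := by show u = f (A i); rw [← hi, hff]
      rw [hvfu, Sym2.eq_swap, hi, h7]
    · have hus : u ∈ S := by
        rw [hSdef, Finset.mem_filter]
        exact ⟨Finset.mem_univ _, h⟩
      obtain ⟨i, hi⟩ := hfromS u hus
      refine ⟨i, ?_⟩
      rw [hvfu, hi]
  exact decomposition hkℓ hl Γ hA hB hABne hAB hsurj hΓe
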